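/- If B ⊆ Σⁿ is (1,1)-guaranteed, then B is (2,2)-guaranteed. -/

import Mathlib

/-- Cost structure for edit distance (removed from Mathlib; restored with its old meaning). -/
structure Levenshtein.Cost (α β δ : Type*) where
  delete : α → δ
  insert : β → δ
  substitute : α → β → δ

/-- The default cost: deletions, insertions and substitutions of distinct letters cost `1`. -/
def Levenshtein.defaultCost {α : Type*} [DecidableEq α] : Levenshtein.Cost α α ℕ where
  delete _ := 1
  insert _ := 1
  substitute a b := if a = b then 0 else 1

/-- Levenshtein distance, by the recursion characterizing Mathlib's former `levenshtein`. -/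
def levenshtein {α β δ : Type*} [Zero δ] [Add δ] [Min δ] (C : Levenshtein.Cost α β δ) :
    List α → List β → δ
  | [], [] => 0
  | [], y :: ys => C.insert y + levenshtein C [] ys
  | x :: xs, [] => C.delete x + levenshtein C xs []
  | x :: xs, y :: ys =>
      min (C.delete x + levenshtein C xs (y :: ys))
        (min (C.insert y + levenshtein C (x :: xs) ys) (C.substitute x y + levenshtein C xs ys))

/-- Edit (Levenshtein) distance between two length-`n` sequences over `α`. -/
def editDist {α : Type*} [DecidableEq α] {n : ℕ} (s t : Fin n → α) : ℕ :=
  levenshtein Levenshtein.defaultCost (List.ofFn s) (List.ofFn t)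

/-- `B` is a `(d, r)`-guaranteed subset of `Σⁿ`: for every pair of sequences within
edit distance `d`, some sequence of `B` lies in both of their `r`-neighborhoods. -/
def IsGuaranteed {α : Type*} [DecidableEq α] {n : ℕ} (d r : ℕ)
    (B : Set (Fin n → α)) : Prop :=
  ∀ s t : Fin n → α, editDist s t ≤ d →
    ∃ v ∈ B, editDist s v ≤ r ∧ editDist t v ≤ r

@[simp] theorem levenshtein_nil_nil {α β δ : Type*} [Zero δ] [Add δ] [Min δ]
    (C : Levenshtein.Cost α β δ) : levenshtein C [] [] = 0 := by
  rw [levenshtein]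

@[simp] theorem levenshtein_nil_cons {α β δ : Type*} [Zero δ] [Add δ] [Min δ]
    (C : Levenshtein.Cost α β δ) (y : β) (ys : List β) :
    levenshtein C [] (y :: ys) = C.insert y + levenshtein C [] ys := by
  rw [levenshtein]

@[simp] theorem levenshtein_cons_nil {α β δ : Type*} [Zero δ] [Add δ] [Min δ]
    (C : Levenshtein.Cost α β δ) (x : α) (xs : List α) :
    levenshtein C (x :: xs) [] = C.delete x + levenshtein C xs [] := by
  rw [levenshtein]

@[simp] theorem levenshtein_cons_cons {α β δ : Type*} [Zero δ] [Add δ] [Min δ]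
    (C : Levenshtein.Cost α β δ) (x : α) (xs : List α) (y : β) (ys : List β) :
    levenshtein C (x :: xs) (y :: ys) =
      min (C.delete x + levenshtein C xs (y :: ys))
        (min (C.insert y + levenshtein C (x :: xs) ys) (C.substitute x y + levenshtein C xs ys)) := by
  rw [levenshtein]

@[simp] theorem Levenshtein.defaultCost_delete {α : Type*} [DecidableEq α] (a : α) :
    (Levenshtein.defaultCost (α := α)).delete a = 1 := rfl

@[simp] theorem Levenshtein.defaultCost_insert {α : Type*} [DecidableEq α] (a : α) :
    (Levenshtein.defaultCost (α := α)).insert a = 1 := rfl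

@[simp] theorem Levenshtein.defaultCost_substitute {α : Type*} [DecidableEq α] (a b : α) :
    (Levenshtein.defaultCost (α := α)).substitute a b = if a = b then 0 else 1 := rfl

namespace Stmt13Aux

variable {α : Type*} [DecidableEq α]

local notation "lev" => levenshtein (Levenshtein.defaultCost (α := α))

theorem lev_self (l : List α) : lev l l = 0 := by
  induction l with
  | nil => simp
  | cons x xs ih => simp [ih]

theorem eq_of_lev_eq_zero : ∀ {l m : List α}, lev l m = 0 → l = m
  | [], [], _ => rfl
  | [], y :: ys, h => by simp at h
  | x :: xs, [], h => by simp at h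
  | x :: xs, y :: ys, h => by
    rw [levenshtein_cons_cons] at h
    simp only [Levenshtein.defaultCost_delete, Levenshtein.defaultCost_insert,
      Levenshtein.defaultCost_substitute] at h
    by_cases hxy : x = y
    · subst hxy
      simp only [if_pos rfl] at h
      have h3 : lev xs ys = 0 := by omega
      rw [eq_of_lev_eq_zero h3]
    · simp only [if_neg hxy] at h
      omega

theorem lev_del_le (a : α) (x y : List α) : lev (a :: x) y ≤ 1 + lev x y := by
  cases y with
  | nil => simp
  | cons b y => rw [levenshtein_cons_cons]; exact min_le_left _ _

theorem lev_ins_le (b : α) (x y : List α) : lev x (b :: y) ≤ 1 + lev x y := by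
  cases x with
  | nil => simp
  | cons a x =>
    rw [levenshtein_cons_cons]
    exact le_trans (min_le_right _ _) (min_le_left _ _)

theorem lev_sub_le (a b : α) (x y : List α) : lev (a :: x) (b :: y) ≤ 1 + lev x y := by
  rw [levenshtein_cons_cons]
  refine le_trans (le_trans (min_le_right _ _) (min_le_right _ _)) ?_
  simp only [Levenshtein.defaultCost_substitute]
  split <;> omega

theorem lev_cons_cons_le (a : α) (x y : List α) : lev (a :: x) (a :: y) ≤ lev x y := by
  rw [levenshtein_cons_cons]
  refine le_trans (le_trans (min_le_right _ _) (min_le_right _ _)) ?_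
  simp

theorem lev_append_le (u x y : List α) : lev (u ++ x) (u ++ y) ≤ lev x y := by
  induction u with
  | nil => simp
  | cons a u ih => exact le_trans (lev_cons_cons_le a _ _) ih

theorem lev_comm : ∀ (l m : List α), lev l m = lev m l
  | [], [] => by simp
  | [], y :: ys => by simp [lev_comm [] ys]
  | x :: xs, [] => by simp [lev_comm xs []]
  | x :: xs, y :: ys => by
    rw [levenshtein_cons_cons, levenshtein_cons_cons, lev_comm xs (y :: ys),
      lev_comm (x :: xs) ys, lev_comm xs ys]
    simp only [Levenshtein.defaultCost_delete, Levenshtein.defaultCost_insert,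
      Levenshtein.defaultCost_substitute]
    have : (if x = y then 0 else 1) = (if y = x then 0 else 1) := by
      simp [eq_comm]
    rw [this]
    omega
  termination_by l m => l.length + m.length

end Stmt13Aux

namespace Stmt13Aux
variable {α : Type*} [DecidableEq α]
local notation "lev" => levenshtein (Levenshtein.defaultCost (α := α))

theorem set_append_length (u w : List α) (c e : α) :
    (u ++ c :: w).set u.length e = u ++ e :: w := by
  induction u with
  | nil => simp
  | cons a u ih => simpa using ih

theorem lev_set_le (l : List α) (i : ℕ) (h : i < l.length) (c : α) :
    lev l (l.set i c) ≤ 1 := by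
  obtain ⟨u, a, w, h2, h1⟩ : ∃ u a w, l = u ++ a :: w ∧ l.set i c = u ++ c :: w :=
    ⟨l.take i, l[i], l.drop (i+1),
      by rw [List.getElem_cons_drop, List.take_append_drop],
      List.set_eq_take_cons_drop _ h⟩
  rw [h1]
  conv_lhs => rw [h2]
  refine le_trans (lev_append_le _ _ _) ?_
  refine le_trans (lev_sub_le _ _ _ _) ?_
  simp [lev_self]

theorem near_of_lev_le_one : ∀ {l m : List α}, l.length = m.length → lev l m ≤ 1 →
    l = m ∨ ∃ (p : ℕ) (b : α) (h : p < l.length), b ≠ l[p] ∧ m = l.set p b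
  | [], m, hl, _ => by left; rw [List.eq_nil_of_length_eq_zero hl.symm]
  | x :: xs, [], hl, _ => by simp at hl
  | x :: xs, y :: ys, hl, h => by
    simp only [List.length_cons, Nat.add_right_cancel_iff] at hl
    rw [levenshtein_cons_cons] at h
    simp only [Levenshtein.defaultCost_delete, Levenshtein.defaultCost_insert,
      Levenshtein.defaultCost_substitute] at h
    have hcases : 1 + lev xs (y :: ys) ≤ 1 ∨ 1 + lev (x :: xs) ys ≤ 1 ∨
        (if x = y then 0 else 1) + lev xs ys ≤ 1 := by omega
    rcases hcases with h1 | h1 | h1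
    · have := eq_of_lev_eq_zero (l := xs) (m := y :: ys) (by omega)
      have hlen := congrArg List.length this; simp only [List.length_cons] at hlen; omega
    · have := eq_of_lev_eq_zero (l := x :: xs) (m := ys) (by omega)
      have hlen := congrArg List.length this; simp only [List.length_cons] at hlen; omega
    · by_cases hxy : x = y
      · subst hxy
        replace h1 : lev xs ys ≤ 1 := by simpa using h1
        rcases near_of_lev_le_one hl h1 with h2 | ⟨p, b, hp, hb, hm⟩
        · left; rw [h2]
        · right
          exact ⟨p + 1, b, by simpa using Nat.succ_lt_succ hp, by simpa using hb,
            by simp [hm]⟩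
      · rw [if_neg hxy] at h1
        have := eq_of_lev_eq_zero (l := xs) (m := ys) (by omega)
        right
        exact ⟨0, y, by simp, by simpa using Ne.symm hxy, by simp [this]⟩

theorem expand_of_lev_le_one : ∀ {l m : List α}, m.length = l.length + 1 → lev l m ≤ 1 →
    ∃ (u : List α) (c : α) (w : List α), l = u ++ w ∧ m = u ++ c :: w
  | l, [], hl, _ => by simp at hl
  | [], y :: ys, hl, _ => by
    simp only [List.length_cons, List.length_nil, Nat.add_right_cancel_iff] at hl
    have : ys = [] := List.eq_nil_of_length_eq_zero hl
    exact ⟨[], y, [], by simp, by simp [this]⟩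
  | x :: xs, y :: ys, hl, h => by
    simp only [List.length_cons, Nat.add_right_cancel_iff] at hl
    rw [levenshtein_cons_cons] at h
    simp only [Levenshtein.defaultCost_delete, Levenshtein.defaultCost_insert,
      Levenshtein.defaultCost_substitute] at h
    have hcases : 1 + lev xs (y :: ys) ≤ 1 ∨ 1 + lev (x :: xs) ys ≤ 1 ∨
        (if x = y then 0 else 1) + lev xs ys ≤ 1 := by omega
    rcases hcases with h1 | h1 | h1
    · have := eq_of_lev_eq_zero (l := xs) (m := y :: ys) (by omega)
      have hlen := congrArg List.length this; simp only [List.length_cons] at hlen; omega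
    · have := eq_of_lev_eq_zero (l := x :: xs) (m := ys) (by omega)
      exact ⟨[], y, x :: xs, by simp, by simp [← this]⟩
    · by_cases hxy : x = y
      · subst hxy
        replace h1 : lev xs ys ≤ 1 := by simpa using h1
        obtain ⟨u, c, w, hu, hw⟩ := expand_of_lev_le_one hl h1
        exact ⟨x :: u, c, w, by simp [hu], by simp [hw]⟩
      · rw [if_neg hxy] at h1
        have := eq_of_lev_eq_zero (l := xs) (m := ys) (by omega)
        have hlen := congrArg List.length this; omega

theorem exists_set_of_lev_le_two : ∀ {l m : List α}, l.length = m.length → lev l m ≤ 2 →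
    0 < l.length → ∃ (p : ℕ) (h : p < l.length), ∀ c, lev (l.set p c) m ≤ 2
  | [], _, _, _, hpos => by simp at hpos
  | x :: xs, [], hl, _, _ => by simp at hl
  | x :: xs, y :: ys, hl, h, _ => by
    simp only [List.length_cons, Nat.add_right_cancel_iff] at hl
    rw [levenshtein_cons_cons] at h
    simp only [Levenshtein.defaultCost_delete, Levenshtein.defaultCost_insert,
      Levenshtein.defaultCost_substitute] at h
    have hcases : 1 + lev xs (y :: ys) ≤ 2 ∨ 1 + lev (x :: xs) ys ≤ 2 ∨
        (if x = y then 0 else 1) + lev xs ys ≤ 2 := by omega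
    rcases hcases with h1 | h1 | h1
    · -- delete branch
      obtain ⟨u, c, w, hu, hw⟩ := expand_of_lev_le_one (l := xs) (m := y :: ys)
        (by simp [hl]) (by omega)
      refine ⟨0, by simp, fun e => ?_⟩
      rw [List.set_cons_zero, hu, hw]
      calc lev (e :: (u ++ w)) (u ++ c :: w) ≤ 1 + lev (u ++ w) (u ++ c :: w) :=
            lev_del_le _ _ _
        _ ≤ 1 + lev w (c :: w) := by have := lev_append_le u w (c :: w); omega
        _ ≤ 1 + (1 + lev w w) := by have := lev_ins_le c w w; omega
        _ ≤ 2 := by simp [lev_self]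
    · -- insert branch
      rw [lev_comm] at h1
      obtain ⟨u, c, w, hu, hw⟩ := expand_of_lev_le_one (l := ys) (m := x :: xs)
        (by simp [hl]) (by omega)
      have hp : u.length < (x :: xs).length := by
        rw [hw]; simp
      refine ⟨u.length, hp, fun e => ?_⟩
      rw [hw, set_append_length, hu]
      calc lev (u ++ e :: w) (y :: (u ++ w)) ≤ 1 + lev (u ++ e :: w) (u ++ w) :=
            lev_ins_le _ _ _
        _ ≤ 1 + lev (e :: w) w := by have := lev_append_le u (e :: w) w; omega
        _ ≤ 1 + (1 + lev w w) := by have := lev_del_le e w w; omega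
        _ ≤ 2 := by simp [lev_self]
    · by_cases hxy : x = y
      · subst hxy
        replace h1 : lev xs ys ≤ 2 := by simpa using h1
        cases xs with
        | nil =>
          have : ys = [] := List.eq_nil_of_length_eq_zero hl.symm
          subst this
          refine ⟨0, by simp, fun e => ?_⟩
          refine le_trans (lev_sub_le _ _ _ _) ?_
          simp
        | cons a as =>
          obtain ⟨p, hp, hc⟩ := exists_set_of_lev_le_two hl h1 (by simp)
          refine ⟨p + 1, by simpa using Nat.succ_lt_succ hp, fun e => ?_⟩
          rw [List.set_cons_succ]
          exact le_trans (lev_cons_cons_le _ _ _) (hc e)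
      · rw [if_neg hxy] at h1
        refine ⟨0, by simp, fun e => ?_⟩
        rw [List.set_cons_zero]
        refine le_trans (lev_sub_le _ _ _ _) ?_
        omega

end Stmt13Aux

namespace Stmt13Aux
variable {α : Type*} [DecidableEq α]
local notation "lev" => levenshtein (Levenshtein.defaultCost (α := α))

theorem ofFn_update {n : ℕ} (s : Fin n → α) (p : ℕ) (hp : p < n) (c : α) :
    List.ofFn (Function.update s ⟨p, hp⟩ c) = (List.ofFn s).set p c := by
  apply List.ext_getElem (by simp)
  intro j h1 h2
  simp only [List.getElem_ofFn, List.getElem_set]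
  rcases eq_or_ne j p with rfl | hne
  · simp [Function.update]
  · rw [if_neg (Ne.symm hne)]
    exact Function.update_of_ne (by simp [Fin.ext_iff]; omega) _ _


end Stmt13Aux

open Stmt13Aux in
theorem stmt13 {α : Type*} [Fintype α] [DecidableEq α] (hα : 1 < Fintype.card α)
    {n : ℕ} (B : Set (Fin n → α)) (hB : IsGuaranteed 1 1 B) :
    IsGuaranteed 2 2 B := by
  intro s t hst
  rcases Nat.eq_zero_or_pos n with rfl | hn0
  · have hts : t = s := funext fun i => i.elim0
    obtain ⟨v, hvB, hsv, -⟩ := hB s s (by simp [editDist, lev_self])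
    exact ⟨v, hvB, le_trans hsv one_le_two, by rw [hts]; exact le_trans hsv one_le_two⟩
  · rw [editDist] at hst
    obtain ⟨p, hp, hset⟩ := exists_set_of_lev_le_two (by simp) hst (by simpa)
    have hp' : p < n := by simpa using hp
    obtain ⟨c, hc⟩ := Fintype.exists_ne_of_one_lt_card hα (s ⟨p, hp'⟩)
    have hofn : List.ofFn (Function.update s ⟨p, hp'⟩ c) = (List.ofFn s).set p c :=
      ofFn_update s p hp' c
    have hss' : editDist s (Function.update s ⟨p, hp'⟩ c) ≤ 1 := by
      rw [editDist, hofn]; exact lev_set_le _ p hp c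
    obtain ⟨v, hvB, hsv, hs'v⟩ := hB s _ hss'
    refine ⟨v, hvB, le_trans hsv one_le_two, ?_⟩
    rw [editDist, lev_comm]
    rw [editDist] at hsv
    rw [editDist, hofn] at hs'v
    have hcls : c ≠ (List.ofFn s)[p]'hp := by
      rw [List.getElem_ofFn]; exact hc
    rcases near_of_lev_le_one (by simp) hsv with h1 | ⟨p1, b1, hp1, hb1, hm1⟩
    · rw [← h1]; exact hst
    rcases near_of_lev_le_one (by simp) hs'v with h2 | ⟨p2, b2, hp2, hb2, hm2⟩
    · rw [← h2]; exact hset c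
    have hpeq : p1 = p := by
      by_contra hne
      have hp2p : p2 = p := by
        by_contra hne2
        have hpn : p < (List.ofFn (n := n) v).length := by simpa using hp'
        have e1 : (List.ofFn v)[p]'hpn = (List.ofFn s)[p]'hp := by
          simp only [hm1]; rw [List.getElem_set_ne (by omega)]
        have e2 : (List.ofFn v)[p]'hpn = c := by
          simp only [hm2]; rw [List.getElem_set_ne (by omega), List.getElem_set_self]
        exact hcls (e1.symm.trans e2).symm
      subst hp2p
      have hpn1 : p1 < (List.ofFn (n := n) v).length := by simpa using hp1
      have e1 : (List.ofFn v)[p1]'hpn1 = b1 := by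
        simp only [hm1]; exact List.getElem_set_self _
      have e2 : (List.ofFn v)[p1]'hpn1 = (List.ofFn s)[p1]'hp1 := by
        simp only [hm2]; rw [List.getElem_set_ne (by omega), List.getElem_set_ne (by omega)]
      exact hb1 (e1.symm.trans e2)
    subst hpeq
    rw [hm1]
    exact hset b1
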